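/- Let G be a cut group and N a normal subgroup of G. Then G/N is a cut group. -/
import Mathlib


/-- A group is *cut* if every generator of `⟨g⟩` is conjugate to `g` or to `g⁻¹`. -/
def IsCutGroup (G : Type*) [Group G] : Prop :=
  ∀ g x : G, Subgroup.zpowers x = Subgroup.zpowers g → (IsConj x g ∨ IsConj x g⁻¹)

/-- A quotient of a cut group is cut. -/
theorem quotient_of_cut_is_cut (G : Type*) [Group G] [Finite G]
    (hcut : IsCutGroup G) (N : Subgroup G) (hN : N.Normal) :
    IsCutGroup (G ⧸ N) := by
  intro gbar xbar h
  obtain ⟨g, rfl⟩ := QuotientGroup.mk'_surjective N gbar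
  set π := QuotientGroup.mk' N
  -- x̄ = (π g)^m for some natural m
  have hx : xbar ∈ Subgroup.zpowers (π g) := h ▸ Subgroup.mem_zpowers xbar
  obtain ⟨m, hm⟩ := mem_powers_iff_mem_zpowers.mpr hx
  have hm : (π g) ^ m = xbar := hm
  -- m is coprime to orderOf (π g)
  have hord : orderOf xbar = orderOf (π g) := by
    rw [← Nat.card_zpowers, ← Nat.card_zpowers, h]
  have hd0 : orderOf (π g) ≠ 0 := (orderOf_pos (π g)).ne'
  have hcop : Nat.Coprime m (orderOf (π g)) := by
    have := orderOf_pow (n := m) (π g)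
    rw [hm, hord] at this
    have hg := Nat.div_eq_self.mp this.symm
    rcases hg with h0 | h1
    · exact absurd h0 hd0
    · exact Nat.coprime_comm.mp h1
  -- lift m to k coprime to orderOf g with k ≡ m mod orderOf (π g)
  have hdvd : orderOf (π g) ∣ orderOf g := orderOf_map_dvd π g
  haveI : NeZero (orderOf g) := ⟨(orderOf_pos g).ne'⟩
  obtain ⟨u, hu⟩ := ZMod.unitsMap_surjective hdvd
    ((ZMod.unitOfCoprime m hcop))
  set k := (u : ZMod (orderOf g)).val with hk
  have hkcop : Nat.Coprime k (orderOf g) := ZMod.val_coe_unit_coprime u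
  -- k ≡ m [MOD orderOf (π g)]
  have hmod : (k : ZMod (orderOf (π g))) = (m : ZMod (orderOf (π g))) := by
    have : ((ZMod.unitsMap hdvd u : ZMod (orderOf (π g)))) =
        (ZMod.unitOfCoprime m hcop : ZMod (orderOf (π g))) := by rw [hu]
    rw [ZMod.unitsMap_def] at this
    simpa [hk, ZMod.natCast_val, ZMod.coe_unitOfCoprime] using this
  have hpk : (π g) ^ k = (π g) ^ m := by
    rw [pow_eq_pow_iff_modEq]
    exact (ZMod.natCast_eq_natCast_iff _ _ _).mp hmod
  -- g^k generates zpowers g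
  have hzp : Subgroup.zpowers (g ^ k) = Subgroup.zpowers g := by
    apply Subgroup.eq_of_le_of_card_ge
    · exact Subgroup.zpowers_le.mpr (Subgroup.npow_mem_zpowers g k)
    · rw [Nat.card_zpowers, Nat.card_zpowers, hkcop.symm.orderOf_pow]
  rcases hcut g (g ^ k) hzp with hc | hc
  · left
    have := π.map_isConj hc
    rw [map_pow] at this
    rwa [hpk, hm] at this
  · right
    have := π.map_isConj hc
    rw [map_pow, map_inv] at this
    rwa [hpk, hm] at this
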